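/- Every automorphism φ of the formal power series ring ℂ⟦z⟧ as an ℝ-algebra is either ℂ-linear or ℂ-antilinear on constants: either φ(C(a)) = C(a) for all a ∈ ℂ, or φ(C(a)) = C(conj(a)) for all a ∈ ℂ, where C : ℂ → ℂ⟦z⟧ is the constant-series embedding and conj denotes complex conjugation. -/

import Mathlib

/-- Every `ℝ`-algebra automorphism of `ℂ⟦z⟧` is either `ℂ`-linear or `ℂ`-antilinear on
constants: it either fixes all constant series or conjugates them. -/
theorem real_automorphism_of_complex_power_series_linear_or_antilinear
    (φ : PowerSeries ℂ ≃ₐ[ℝ] PowerSeries ℂ) :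
    (∀ a : ℂ, φ (PowerSeries.C a) = PowerSeries.C a) ∨
    (∀ a : ℂ, φ (PowerSeries.C a) = PowerSeries.C (starRingEnd ℂ a)) := by
  have hreal : ∀ r : ℝ, φ (PowerSeries.C (r : ℂ)) = PowerSeries.C (r : ℂ) := by
    intro r
    have h1 : (algebraMap ℝ (PowerSeries ℂ)) r = PowerSeries.C (r : ℂ) := by
      rw [PowerSeries.algebraMap_apply]; rfl
    rw [← h1, φ.commutes]
  set x := φ (PowerSeries.C Complex.I) with hx
  have hi : (PowerSeries.C Complex.I) ^ 2 = -1 := by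
    rw [← map_pow, Complex.I_sq, map_neg, map_one]
  have hsq : x ^ 2 = -1 := by
    have : x ^ 2 = φ (PowerSeries.C Complex.I ^ 2) := (map_pow φ _ 2).symm
    rw [this, hi, map_neg, map_one]
  have hfact : (x - PowerSeries.C Complex.I) * (x + PowerSeries.C Complex.I) = 0 := by
    linear_combination hsq - hi
  have hdecomp : ∀ a : ℂ, φ (PowerSeries.C a)
      = PowerSeries.C (a.re : ℂ) + PowerSeries.C (a.im : ℂ) * x := by
    intro a
    have ha : PowerSeries.C a
        = PowerSeries.C (a.re : ℂ) + PowerSeries.C (a.im : ℂ) * PowerSeries.C Complex.I := by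
      rw [← map_mul, ← map_add, Complex.re_add_im]
    rw [ha, map_add, map_mul, hreal, hreal]
  rcases mul_eq_zero.mp hfact with h | h
  · left
    intro a
    rw [hdecomp a, sub_eq_zero.mp h, ← map_mul, ← map_add, Complex.re_add_im]
  · right
    intro a
    have hxe : x = - PowerSeries.C Complex.I := eq_neg_of_add_eq_zero_left h
    have hconj : (starRingEnd ℂ) a = (a.re : ℂ) + (a.im : ℂ) * (-Complex.I) := by
      simp [Complex.ext_iff]
    rw [hdecomp a, hxe, hconj, map_add, map_mul, map_neg]
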